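/- Let x, m, v, y be non-zero real numbers with m² = (3/2)x², v² = (3/2)x² and y² = x², and let 𝔫 be the 5-dimensional real Lie algebra with orthonormal basis {E₁,…,E₅} and non-zero brackets [E₁,E₂] = m·E₃, [E₁,E₃] = v·E₄, [E₁,E₄] = x·E₅, [E₂,E₃] = y·E₅. Then the diagonal endomorphism D defined by D(E₁) = (3/4)x²·E₁, D(E₂) = (3/2)x²·E₂, D(E₃) = (9/4)x²·E₃, D(E₄) = 3x²·E₄, D(E₅) = (15/4)x²·E₅ is a derivation of 𝔫, and Ric = −(11/4)x²·Id + D. -/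
import Mathlib


open scoped BigOperators

namespace Nilsoliton9

noncomputable section

abbrev V : Type := Fin 5 → ℝ

/-- The orthonormal basis vectors E₁,…,E₅ (indexed 0,…,4). -/
def E (i : Fin 5) : V := Pi.single i 1

/-- The inner product making `E` an orthonormal basis. -/
def ip (x y : V) : ℝ := ∑ i, x i * y i

/-- `D` is a derivation of the bracket `br`. -/
def IsDerivation (br : V → V → V) (D : V →ₗ[ℝ] V) : Prop :=
  ∀ X Y : V, D (br X Y) = br (D X) Y + br X (D Y)

/-- `Ric` is the Ricci operator of the nilpotent Lie group with left-invariant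
metric determined by the bracket `br` and the orthonormal basis `E`. -/
def IsRicci (br : V → V → V) (Ric : V →ₗ[ℝ] V) : Prop :=
  ∀ X Y : V, ip (Ric X) Y =
      -(1/2) * (∑ i : Fin 5, ip (br X (E i)) (br Y (E i)))
      + (1/4) * (∑ i : Fin 5, ∑ j : Fin 5, ip (br (E i) (E j)) X * ip (br (E i) (E j)) Y)

/-- The bracket: [E₁,E₂] = m·E₃, [E₁,E₃] = v·E₄, [E₁,E₄] = x·E₅, [E₂,E₃] = y·E₅. -/
def br (m v x y : ℝ) (X Y : V) : V :=
  (m * (X 0 * Y 1 - X 1 * Y 0)) • E 2 + (v * (X 0 * Y 2 - X 2 * Y 0)) • E 3 + (x * (X 0 * Y 3 - X 3 * Y 0) + y * (X 1 * Y 2 - X 2 * Y 1)) • E 4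

lemma ipE (X : V) (j : Fin 5) : ip X (E j) = X j := by
  simp [ip, E, Pi.single_apply]

lemma ip_eq (X Y : V) : ip X Y = X 0*Y 0 + X 1*Y 1 + X 2*Y 2 + X 3*Y 3 + X 4*Y 4 := by
  simp [ip, Fin.sum_univ_five]

lemma br_eq (m v x y : ℝ) (X Y : V) : br m v x y X Y =
    ![0, 0, m*(X 0*Y 1 - X 1*Y 0), v*(X 0*Y 2 - X 2*Y 0), x*(X 0*Y 3 - X 3*Y 0)+y*(X 1*Y 2 - X 2*Y 1)] := by
  funext j; fin_cases j <;> simp [br, E, Pi.single_apply]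

lemma E0 : E (0:Fin 5) = ![1,0,0,0,0] := by funext j; fin_cases j <;> simp [E, Pi.single_apply]
lemma E1 : E (1:Fin 5) = ![0,1,0,0,0] := by funext j; fin_cases j <;> simp [E, Pi.single_apply]
lemma E2 : E (2:Fin 5) = ![0,0,1,0,0] := by funext j; fin_cases j <;> simp [E, Pi.single_apply]
lemma E3 : E (3:Fin 5) = ![0,0,0,1,0] := by funext j; fin_cases j <;> simp [E, Pi.single_apply]
lemma E4 : E (4:Fin 5) = ![0,0,0,0,1] := by funext j; fin_cases j <;> simp [E, Pi.single_apply]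


lemma sum1 (m v x y : ℝ) (X Y : V) :
    ∑ k : Fin 5, ip (br m v x y X (E k)) (br m v x y Y (E k)) =
      m^2*(X 0*Y 0 + X 1*Y 1) + v^2*(X 0*Y 0 + X 2*Y 2) + x^2*(X 0*Y 0 + X 3*Y 3)
        + y^2*(X 1*Y 1 + X 2*Y 2) := by
  simp only [Fin.sum_univ_five, br_eq, ip_eq, E0, E1, E2, E3, E4,
    Matrix.cons_val_zero, Matrix.cons_val_one, Matrix.head_cons,
    Matrix.cons_val_two, Matrix.tail_cons, Matrix.cons_val_three, Matrix.cons_val_four]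
  ring

lemma sum2 (m v x y : ℝ) (X Y : V) :
    ∑ k : Fin 5, ∑ l : Fin 5, ip (br m v x y (E k) (E l)) X * ip (br m v x y (E k) (E l)) Y =
      2*(m^2 * (X 2*Y 2) + v^2 * (X 3*Y 3) + (x^2+y^2) * (X 4*Y 4)) := by
  simp only [Fin.sum_univ_five, br_eq, ip_eq, E0, E1, E2, E3, E4,
    Matrix.cons_val_zero, Matrix.cons_val_one, Matrix.head_cons,
    Matrix.cons_val_two, Matrix.tail_cons, Matrix.cons_val_three, Matrix.cons_val_four]
  ring

/-- coefficients of the diagonal derivation -/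
def coef (x : ℝ) : Fin 5 → ℝ := ![3/4*x^2, 3/2*x^2, 9/4*x^2, 3*x^2, 15/4*x^2]

lemma Xsum (X : V) : X = ∑ i, X i • E i := by
  funext k
  simp [E, Finset.sum_apply, Pi.single_apply, mul_ite]

theorem stmt9 (x m v y : ℝ) (hx : x ≠ 0) (hm : m ≠ 0) (hv : v ≠ 0) (hy : y ≠ 0) (hm2 : m ^ 2 = (3/2) * x ^ 2) (hv2 : v ^ 2 = (3/2) * x ^ 2) (hy2 : y ^ 2 = x ^ 2)
    (Ric : V →ₗ[ℝ] V) (hRic : IsRicci (br m v x y) Ric)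
    (D : V →ₗ[ℝ] V)
    (hD0 : D (E 0) = ((3/4) * x ^ 2) • E 0)
    (hD1 : D (E 1) = ((3/2) * x ^ 2) • E 1)
    (hD2 : D (E 2) = ((9/4) * x ^ 2) • E 2)
    (hD3 : D (E 3) = (3 * x ^ 2) • E 3)
    (hD4 : D (E 4) = ((15/4) * x ^ 2) • E 4) :
    IsDerivation (br m v x y) D ∧
    Ric = (-(11/4) * x ^ 2) • (LinearMap.id : V →ₗ[ℝ] V) + D := by
  have hD' : ∀ i, D (E i) = coef x i • E i := by
    intro i; fin_cases i
    · simpa [coef] using hD0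
    · simpa [coef] using hD1
    · simpa [coef] using hD2
    · simpa [coef] using hD3
    · simpa [coef] using hD4
  have hDfun : ∀ (X : V) (j : Fin 5), D X j = coef x j * X j := by
    intro X j
    conv_lhs => rw [Xsum X]
    rw [map_sum]
    simp only [map_smul, hD']
    simp [E, Pi.single_apply, Finset.sum_apply, mul_ite, mul_comm]
  -- key coordinate formula for Ric
  have key : ∀ i j : Fin 5, Ric (E i) j =
      -(1/2) * (∑ k : Fin 5, ip (br m v x y (E i) (E k)) (br m v x y (E j) (E k)))
      + (1/4) * (∑ k : Fin 5, ∑ l : Fin 5, ip (br m v x y (E k) (E l)) (E i) * ip (br m v x y (E k) (E l)) (E j)) := by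
    intro i j
    rw [← ipE (Ric (E i)) j]
    exact hRic (E i) (E j)
  constructor
  · intro X Y
    funext j
    rw [Pi.add_apply, hDfun]
    have h2 : ∀ k, D X k = coef x k * X k := fun k => hDfun X k
    have h3 : ∀ k, D Y k = coef x k * Y k := fun k => hDfun Y k
    rw [br_eq, br_eq, br_eq]
    simp only [h2, h3]
    fin_cases j <;> simp [coef] <;> ring
  · apply Module.Basis.ext (Pi.basisFun ℝ (Fin 5))
    intro i
    have hb : (Pi.basisFun ℝ (Fin 5)) i = E i := by
      funext k; simp [E, Pi.basisFun_apply]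
    rw [hb]
    funext j
    rw [LinearMap.add_apply, Pi.add_apply, LinearMap.smul_apply, LinearMap.id_apply,
      Pi.smul_apply, smul_eq_mul, hDfun, key i j, sum1, sum2]
    fin_cases i <;> fin_cases j <;>
      · simp [E, Pi.single_apply, coef]
        try linarith [hm2, hv2, hy2]
        try nlinarith [hm2, hv2, hy2]

end

end Nilsoliton9
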